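/- Let V be a real inner product space and suppose a vector n ∈ V satisfies ⟨W, Z⟩·⟨n, φ(Y)⟩ = ⟨W, Y⟩·⟨n, φ(Z)⟩ for all W, Y, Z ∈ V, where φ : V → V' is a linear map into another inner product space. If dim V > 1, then ⟨n, φ(W)⟩ = 0 for every W ∈ V. -/
import Mathlib

open scoped RealInnerProductSpace

/-- Linear-algebraic core of minimality: a symmetric relation forces ⟪n, φ W⟫ = 0. -/
theorem symmetric_relation_forces_vanishing
    {V V' : Type*} [NormedAddCommGroup V] [InnerProductSpace ℝ V]
    [NormedAddCommGroup V'] [InnerProductSpace ℝ V']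
    [FiniteDimensional ℝ V]
    (φ : V →ₗ[ℝ] V') (n : V')
    (hdim : 1 < Module.finrank ℝ V)
    (hrel : ∀ W Y Z : V, ⟪W, Z⟫ * ⟪n, φ Y⟫ = ⟪W, Y⟫ * ⟪n, φ Z⟫) :
    ∀ W : V, ⟪n, φ W⟫ = 0 := by
  intro W
  have hc : 0 < Module.finrank ℝ (ℝ ∙ W)ᗮ := by
    have h1 : Module.finrank ℝ (ℝ ∙ W) ≤ 1 := by simpa using finrank_span_le_card ({W} : Set V)
    have := Submodule.finrank_add_finrank_orthogonal (K := ℝ ∙ W) (E := V)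
    omega
  obtain ⟨Z, hZmem, hZne⟩ := Submodule.exists_mem_ne_zero_of_ne_bot (p := (ℝ ∙ W)ᗮ) (by
    intro hbot
    rw [hbot] at hc
    simp at hc)
  have hZW : ⟪Z, W⟫ = 0 := by
    have := hZmem W (Submodule.mem_span_singleton_self W)
    simpa [real_inner_comm] using this
  have h := hrel Z Z W
  rw [hZW, zero_mul, real_inner_self_eq_norm_sq] at h
  have hne : (‖Z‖ : ℝ) ^ 2 ≠ 0 := pow_ne_zero _ (norm_ne_zero_iff.mpr hZne)
  rcases mul_eq_zero.mp h.symm with h1 | h2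
  · exact absurd h1 hne
  · exact h2
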